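/- Lemma (recursive inequality with a source at a distant vertex, Lemma 5.2, part 1). Let a directed graph on the finite vertex set V = {0,…,N−1} with distinguished vertex 0 be given, with 𝒩 i ≠ ∅ for every i ∈ V, and let k ∈ V and r ≥ 1 with k ∼ᵣ 0. Then there exist θ* ∈ (0,1) and γ̃^(r) > 0, depending only on the graph, r and k, with the following property: for all families of nonnegative reals (Aⁱ)_{i∈V}, (Bⁱ)_{i∈V}, a real E ≥ 0, and positive reals (αᵢ), (βᵢ), (α′ᵢ), (β′ᵢ) satisfying αᵢ·Aⁱ + βᵢ·Bⁱ ≤ E·𝟙_{i=k} + α′ᵢ·∑_{j∈𝒩 i} Aʲ + β′ᵢ·∑_{j∈𝒩 i} Bʲ for every i ∈ V, if γ := max over i ∈ V of max( α′ᵢ / (min_{j∈𝒩 i} αⱼ), β′ᵢ / (min_{j∈𝒩 i} βⱼ) ) satisfies γ ≤ θ*, then α₀·A⁰ + β₀·B⁰ ≤ γ̃^(r) · E. -/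

import Mathlib

/-- **Lemma 5.2, part 1** (recursive inequality with a source at a distant vertex).
The graph is on the finite vertex set `Fin N` (i.e. `{0,…,N−1}`) with
distinguished vertex `0`, finite neighbourhoods `𝒩 i` with `i ∉ 𝒩 i` and
`𝒩 i ≠ ∅` for all `i`; `S` is the family of distance spheres of `0`.  Given
`k ∼ᵣ 0` with `r ≥ 1`, there exist `θ* ∈ (0,1)` and `γ̃⁽ʳ⁾ > 0` such that for
all nonnegative `(Aⁱ), (Bⁱ)`, `E ≥ 0` and positive `(αᵢ), (βᵢ), (α'ᵢ), (β'ᵢ)`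
with `αᵢ Aⁱ + βᵢ Bⁱ ≤ E·𝟙_{i=k} + α'ᵢ ∑_{j∈𝒩 i} Aʲ + β'ᵢ ∑_{j∈𝒩 i} Bʲ` for all
`i`, if the ratio bound `γ` satisfies `γ ≤ θ*` then
`α₀ A⁰ + β₀ B⁰ ≤ γ̃⁽ʳ⁾ · E`. -/
theorem stmt2 (N : ℕ) [NeZero N]
    (𝒩 : Fin N → Finset (Fin N)) (hloop : ∀ i, i ∉ 𝒩 i)
    (hne : ∀ i, (𝒩 i).Nonempty)
    (S : ℕ → Finset (Fin N)) (hS0 : S 0 = {0})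
    (hS : ∀ m, S (m + 1) = ((S m).biUnion 𝒩) \ ((Finset.range (m + 1)).biUnion S))
    (k : Fin N) (r : ℕ) (hr : 1 ≤ r) (hk : k ∈ S r) :
    ∃ θstar : ℝ, θstar ∈ Set.Ioo (0 : ℝ) 1 ∧ ∃ γt : ℝ, 0 < γt ∧
      ∀ (A B α β α' β' : Fin N → ℝ) (E : ℝ), 0 ≤ E →
        (∀ i, 0 ≤ A i) → (∀ i, 0 ≤ B i) →
        (∀ i, 0 < α i) → (∀ i, 0 < β i) → (∀ i, 0 < α' i) → (∀ i, 0 < β' i) →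
        (∀ i, α i * A i + β i * B i ≤
          (if i = k then E else 0) + α' i * ∑ j ∈ 𝒩 i, A j + β' i * ∑ j ∈ 𝒩 i, B j) →
        ∀ γ : ℝ,
          (∀ i, ∀ j ∈ 𝒩 i, α' i ≤ γ * α j ∧ β' i ≤ γ * β j) →
          γ ≤ θstar →
          α 0 * A 0 + β 0 * B 0 ≤ γt * E := by

  have hN : (1:ℝ) ≤ N := by
    have := NeZero.pos N
    exact_mod_cast this
  refine ⟨1/(2*N), ⟨by positivity, ?_⟩, 2, by norm_num, ?_⟩
  · rw [div_lt_one (by positivity)]; linarith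
  intro A B α β α' β' E hE hA hB hα hβ hα' hβ' hyp γ hγ hγθ
  set f : Fin N → ℝ := fun i => α i * A i + β i * B i with hf
  have hf0 : ∀ i, 0 ≤ f i := fun i =>
    add_nonneg (mul_nonneg (hα i).le (hA i)) (mul_nonneg (hβ i).le (hB i))
  obtain ⟨j0, hj0⟩ := hne 0
  have hγ0 : 0 < γ := by nlinarith [hα' 0, hα j0, (hγ 0 j0 hj0).1]
  have key : ∀ i, f i ≤ (if i = k then E else 0) + γ * ∑ j ∈ 𝒩 i, f j := by
    intro i
    refine (hyp i).trans ?_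
    have h1 : α' i * ∑ j ∈ 𝒩 i, A j + β' i * ∑ j ∈ 𝒩 i, B j ≤ γ * ∑ j ∈ 𝒩 i, f j := by
      rw [Finset.mul_sum, Finset.mul_sum, Finset.mul_sum, ← Finset.sum_add_distrib]
      refine Finset.sum_le_sum fun j hj => ?_
      have h := hγ i j hj
      have h1 := mul_le_mul_of_nonneg_right h.1 (hA j)
      have h2 := mul_le_mul_of_nonneg_right h.2 (hB j)
      simp only [hf]
      nlinarith
    linarith
  set F := ∑ i, f i with hF
  have hFnn : 0 ≤ F := Finset.sum_nonneg fun i _ => hf0 i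
  have hb : ∑ i : Fin N, ∑ j ∈ 𝒩 i, f j ≤ N * F := by
    calc ∑ i : Fin N, ∑ j ∈ 𝒩 i, f j ≤ ∑ _i : Fin N, F :=
          Finset.sum_le_sum fun i _ =>
            Finset.sum_le_sum_of_subset_of_nonneg (Finset.subset_univ _)
              (fun j _ _ => hf0 j)
      _ = N * F := by simp [Finset.sum_const, Finset.card_univ, nsmul_eq_mul]
  have hsum : F ≤ E + γ * (N * F) := by
    calc F ≤ ∑ i, ((if i = k then E else 0) + γ * ∑ j ∈ 𝒩 i, f j) :=
          Finset.sum_le_sum fun i _ => key i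
      _ = E + γ * ∑ i, ∑ j ∈ 𝒩 i, f j := by
          rw [Finset.sum_add_distrib, ← Finset.mul_sum]
          simp
      _ ≤ E + γ * (N * F) := by
          exact add_le_add_right (mul_le_mul_of_nonneg_left hb hγ0.le) E
  have hγN : γ * N ≤ 1/2 := by
    have h2 := (le_div_iff₀ (by positivity : (0:ℝ) < 2*(N:ℝ))).mp hγθ
    nlinarith
  have hF2 : F ≤ 2 * E := by nlinarith
  have h0 : f 0 ≤ F := Finset.single_le_sum (fun i _ => hf0 i) (Finset.mem_univ 0)
  calc α 0 * A 0 + β 0 * B 0 = f 0 := rfl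
    _ ≤ F := h0
    _ ≤ 2 * E := hF2
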